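/- Let F be a union of vertex-disjoint paths (a linear forest) with k > 1 edges in a graph G of order n. If the minimum degree δ(G) ≥ (n+k)/2, then G has a Hamilton cycle containing all edges of F. -/

import Mathlib

open SimpleGraph

variable {V : Type} [Fintype V] [DecidableEq V]

set_option linter.unusedSectionVars false

namespace Posa

set_option linter.unusedSectionVars false

variable {V : Type} [DecidableEq V]

/-- The list of unordered pairs of consecutive elements of a list. -/
def dpairs : List V → List (Sym2 V)
  | a :: b :: l => s(a, b) :: dpairs (b :: l)
  | _ => []

@[simp] lemma dpairs_nil : dpairs ([] : List V) = [] := rfl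
@[simp] lemma dpairs_single (a : V) : dpairs [a] = [] := rfl
@[simp] lemma dpairs_cons_cons (a b : V) (l : List V) :
    dpairs (a :: b :: l) = s(a, b) :: dpairs (b :: l) := rfl

lemma dpairs_append_cons (xs : List V) (b : V) (ys : List V) :
    dpairs (xs ++ b :: ys) = dpairs (xs ++ [b]) ++ dpairs (b :: ys) := by
  induction xs with
  | nil => simp
  | cons a xs ih =>
    cases xs with
    | nil => simp
    | cons c xs =>
      simp only [List.cons_append, dpairs_cons_cons] at *
      rw [ih]

lemma dpairs_concat (xs : List V) (hxs : xs ≠ []) (b : V) :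
    dpairs (xs ++ [b]) = dpairs xs ++ [s(xs.getLast hxs, b)] := by
  induction xs with
  | nil => simp at hxs
  | cons a xs ih =>
    cases xs with
    | nil => simp
    | cons c xs =>
      simp only [List.cons_append, dpairs_cons_cons, List.getLast_cons (List.cons_ne_nil c xs)]
      rw [← List.cons_append, ih (List.cons_ne_nil c xs)]

lemma dpairs_append (P Q : List V) (hP : P ≠ []) (hQ : Q ≠ []) :
    dpairs (P ++ Q) = dpairs P ++ s(P.getLast hP, Q.head hQ) :: dpairs Q := by
  obtain ⟨y, Q', rfl⟩ := List.exists_cons_of_ne_nil hQ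
  rw [dpairs_append_cons, dpairs_concat P hP y]
  simp

lemma mem_dpairs_split {e : Sym2 V} {L : List V} (h : e ∈ dpairs L) :
    ∃ (A : List V) (x y : V) (B : List V), L = A ++ x :: y :: B ∧ e = s(x, y) := by
  induction L with
  | nil => simp [dpairs] at h
  | cons a L ih =>
    cases L with
    | nil => simp [dpairs] at h
    | cons b L =>
      rw [dpairs_cons_cons, List.mem_cons] at h
      rcases h with h | h
      · exact ⟨[], a, b, L, rfl, h⟩
      · obtain ⟨A, x, y, B, hL, he⟩ := ih h
        exact ⟨a :: A, x, y, B, by rw [hL]; rfl, he⟩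

lemma mem_dpairs_join (A : List V) (x y : V) (B : List V) :
    s(x, y) ∈ dpairs (A ++ x :: y :: B) := by
  induction A with
  | nil => simp
  | cons a A ih =>
    cases hA : A ++ x :: y :: B with
    | nil => simp at hA
    | cons c L =>
      rw [List.cons_append, hA, dpairs_cons_cons, ← hA]
      exact List.mem_cons_of_mem _ ih

lemma mem_dpairs_append_left {e : Sym2 V} {C : List V} (X : List V) (h : e ∈ dpairs C) :
    e ∈ dpairs (C ++ X) := by
  obtain ⟨A, x, y, B, rfl, rfl⟩ := mem_dpairs_split h
  simpa using mem_dpairs_join A x y (B ++ X)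

lemma mem_dpairs_append_right {e : Sym2 V} (X : List V) {D : List V} (h : e ∈ dpairs D) :
    e ∈ dpairs (X ++ D) := by
  obtain ⟨A, x, y, B, rfl, rfl⟩ := mem_dpairs_split h
  rw [← List.append_assoc]
  exact mem_dpairs_join (X ++ A) x y B

lemma dpairs_reverse (l : List V) : dpairs l.reverse = (dpairs l).reverse := by
  induction l with
  | nil => simp
  | cons a l ih =>
    cases l with
    | nil => simp
    | cons b l =>
      rw [show (a :: b :: l).reverse = (b :: l).reverse ++ [a] from by simp,
        dpairs_concat _ (by simp) a, ih]
      simp [List.getLast_reverse, Sym2.eq_swap]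

/-- The cyclic pairs of a list. -/
def cyc (l : List V) : List (Sym2 V) :=
  if h : l = [] then [] else dpairs l ++ [s(l.getLast h, l.head h)]

lemma cyc_eq (l : List V) (h : l ≠ []) :
    cyc l = dpairs l ++ [s(l.getLast h, l.head h)] := by
  rw [cyc, dif_neg h]

lemma dpairs_subset_cyc {e : Sym2 V} {l : List V} (h : e ∈ dpairs l) : e ∈ cyc l := by
  have hl : l ≠ [] := by rintro rfl; simp [dpairs] at h
  rw [cyc_eq l hl]
  exact List.mem_append_left _ h

lemma cyc_append_perm (P Q : List V) (hP : P ≠ []) (hQ : Q ≠ []) :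
    (cyc (P ++ Q)).Perm (cyc (Q ++ P)) := by
  have hPQ : P ++ Q ≠ [] := by simp [hP]
  have hQP : Q ++ P ≠ [] := by simp [hQ]
  rw [cyc_eq _ hPQ, cyc_eq _ hQP, dpairs_append P Q hP hQ, dpairs_append Q P hQ hP,
    List.getLast_append_of_ne_nil _ hQ, List.head_append_of_ne_nil hP,
    List.getLast_append_of_ne_nil _ hP, List.head_append_of_ne_nil hQ]
  rw [List.perm_iff_count]
  intro e
  simp only [List.count_append, List.count_cons]
  omega


def mkWalk (G : SimpleGraph V) : (a : V) → (l : List V) → (b : V) →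
    (∀ e ∈ dpairs (a :: l ++ [b]), e ∈ G.edgeSet) → G.Walk a b
  | a, [], b, h => Walk.cons (G.mem_edgeSet.1 (h s(a, b) (by simp [dpairs]))) Walk.nil
  | a, c :: l, b, h => Walk.cons (G.mem_edgeSet.1 (h s(a, c) (by simp [dpairs])))
      (mkWalk G c l b (fun e he => h e (List.mem_cons_of_mem _ he)))

@[simp] lemma mkWalk_support (G : SimpleGraph V) (a : V) (l : List V) (b : V) (h) :
    (mkWalk G a l b h).support = a :: l ++ [b] := by
  induction l generalizing a with
  | nil => simp [mkWalk]
  | cons c l ih => simp [mkWalk, ih]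

@[simp] lemma mkWalk_edges (G : SimpleGraph V) (a : V) (l : List V) (b : V) (h) :
    (mkWalk G a l b h).edges = dpairs (a :: l ++ [b]) := by
  induction l generalizing a with
  | nil => simp [mkWalk, dpairs]
  | cons c l ih => simp [mkWalk, ih, dpairs]


lemma not_mem_dpairs_ends {h0 e0 : V} {mid : List V} (hmid : mid ≠ [])
    (hnd : (h0 :: mid ++ [e0]).Nodup) : s(e0, h0) ∉ dpairs (h0 :: mid ++ [e0]) := by
  intro h
  rw [List.cons_append] at hnd h
  rw [List.nodup_cons] at hnd
  obtain ⟨hh0, hnd⟩ := hnd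
  obtain ⟨A, x, y, B, hL, he⟩ := mem_dpairs_split h
  rw [Sym2.eq_iff] at he
  rcases he with ⟨he0, hh⟩ | ⟨he0, hh⟩
  · -- e0 = x, h0 = y
    cases A with
    | nil =>
      rw [List.nil_append] at hL
      injection hL with hax hrest
      exact hh0 (by rw [hax, ← he0]; exact List.mem_append_right _ (by simp))
    | cons a A' =>
      rw [List.cons_append] at hL
      injection hL with hax hrest
      refine hh0 ?_
      rw [hrest, ← hh]
      exact List.mem_append_right _ (List.mem_cons_of_mem _ (List.mem_cons_self))
  · -- e0 = y, h0 = x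
    cases A with
    | nil =>
      rw [List.nil_append] at hL
      injection hL with hax hrest
      -- mid ++ [e0] = y :: B, h0 = x, e0 = y
      cases B with
      | nil =>
        have : mid = [] := by
          have := congrArg List.length hrest
          simpa using this
        exact hmid this
      | cons b B' =>
        have h1 : (y :: b :: B').getLast? = some e0 := by
          rw [← hrest]; exact List.getLast?_concat
        rw [List.getLast?_cons_cons] at h1
        have h2 : e0 ∈ b :: B' := by
          have := List.getLast?_eq_getLast (l := b :: B') (by simp)
          rw [this] at h1
          injection h1 with h1
          rw [← h1]; exact List.getLast_mem _
        rw [hrest, List.nodup_cons] at hnd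
        exact hnd.1 (he0 ▸ h2)
    | cons a A' =>
      rw [List.cons_append] at hL
      injection hL with hax hrest
      refine hh0 ?_
      rw [hrest, ← hh]
      exact List.mem_append_right _ (List.mem_cons_self)

def good (H F : SimpleGraph V) (l : List V) : Prop :=
  l.Nodup ∧ (∀ w, w ∈ l) ∧ (∀ e ∈ cyc l, e ∈ H.edgeSet) ∧ (∀ e ∈ F.edgeSet, e ∈ cyc l)

lemma good_length [Fintype V] {H F : SimpleGraph V} {l : List V} (hg : good H F l) :
    l.length = Fintype.card V := by
  have : l.toFinset = Finset.univ := Finset.eq_univ_iff_forall.2 (fun x => List.mem_toFinset.2 (hg.2.1 x))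
  rw [← List.toFinset_card_of_nodup hg.1, this, Finset.card_univ]

lemma buildHam [Fintype V] {H F : SimpleGraph V} {l : List V} (hg : good H F l)
    (hlen : 4 ≤ l.length) :
    ∃ (u : V) (c : H.Walk u u), c.IsHamiltonianCycle ∧ ∀ e ∈ F.edgeSet, e ∈ c.edges := by
  obtain ⟨hnd, hcov, hadj, hF⟩ := hg
  match l, hlen, hnd, hcov, hadj, hF with
  | a :: b :: t, hlen, hnd, hcov, hadj, hF =>
  have ht : t ≠ [] := by rintro rfl; simp at hlen
  have hlne : a :: b :: t ≠ [] := by simp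
  have hcyc : cyc (a :: b :: t) = dpairs ((a :: b :: t) ++ [a]) := by
    rw [cyc_eq _ hlne, dpairs_append (a :: b :: t) [a] hlne (by simp)]
    simp
  have hadj' : ∀ e ∈ dpairs (a :: (b :: t) ++ [a]), e ∈ H.edgeSet := by
    intro e he
    exact hadj e (by rw [hcyc]; exact he)
  have hperm : ((b :: t) ++ [a]).Perm (a :: b :: t) := by
    have := List.perm_append_comm (l₁ := b :: t) (l₂ := [a])
    simpa using this
  have hndp : ((b :: t) ++ [a]).Nodup := hperm.nodup_iff.2 hnd
  have hab : H.Adj a b := by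
    rw [← SimpleGraph.mem_edgeSet]
    exact hadj s(a, b) (dpairs_subset_cyc (mem_dpairs_join [] a b t))
  set p : H.Walk b a := mkWalk H b t a (fun e he => hadj' e (List.mem_cons_of_mem _ he)) with hp
  have hpedges : p.edges = dpairs (b :: t ++ [a]) := mkWalk_edges H b t a _
  have hpsupp : p.support = b :: t ++ [a] := mkWalk_support H b t a _
  have hppath : p.IsPath := Walk.IsPath.mk' (by rw [hpsupp]; exact hndp)
  have hnotmem : s(a, b) ∉ p.edges := by
    rw [hpedges]
    exact not_mem_dpairs_ends ht hndp
  refine ⟨a, Walk.cons hab p, ?_, ?_⟩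
  · rw [Walk.isHamiltonianCycle_iff_isCycle_and_support_count_tail_eq_one]
    constructor
    · exact (Walk.cons_isCycle_iff p hab).2 ⟨hppath, hnotmem⟩
    · intro x
      rw [Walk.support_cons, List.tail_cons, hpsupp]
      refine List.count_eq_one_of_mem hndp (hperm.mem_iff.2 (hcov x))
  · intro e he
    have := hF e he
    rw [hcyc] at this
    rw [Walk.edges_cons, hpedges]
    exact this

lemma surgery {H F : SimpleGraph V} (P Q : List V) (hP : P ≠ []) (hQ : Q ≠ [])
    (hnd : (P ++ Q).Nodup) (hcov : ∀ w, w ∈ P ++ Q)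
    (hHadj : ∀ e ∈ dpairs (P ++ Q), e ∈ H.edgeSet)
    (hFsub : ∀ e ∈ F.edgeSet, e ∈ dpairs (P ++ Q))
    (hFmid : s(P.getLast hP, Q.head hQ) ∉ F.edgeSet)
    (h1 : H.Adj (P.head hP) (Q.head hQ))
    (h2 : H.Adj (Q.getLast hQ) (P.getLast hP)) :
    good H F (P ++ Q.reverse) := by
  have hQr : Q.reverse ≠ [] := by simpa using hQ
  have hPQr : P ++ Q.reverse ≠ [] := by simp [hP]
  have hperm : (P ++ Q.reverse).Perm (P ++ Q) := List.Perm.append_left P (List.reverse_perm Q)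
  have hsplit : dpairs (P ++ Q) = dpairs P ++ s(P.getLast hP, Q.head hQ) :: dpairs Q :=
    dpairs_append P Q hP hQ
  have hrevhead : Q.reverse.head hQr = Q.getLast hQ := List.head_reverse hQr
  have hrevlast : Q.reverse.getLast hQr = Q.head hQ := List.getLast_reverse hQr
  have hmem : ∀ e, e ∈ cyc (P ++ Q.reverse) ↔
      (e ∈ dpairs P ∨ e ∈ dpairs Q ∨ e = s(P.getLast hP, Q.getLast hQ) ∨
        e = s(Q.head hQ, P.head hP)) := by
    intro e
    rw [cyc_eq _ hPQr, dpairs_append P Q.reverse hP hQr, hrevhead,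
      List.getLast_append_of_ne_nil _ hQr, List.head_append_of_ne_nil hP, hrevlast,
      dpairs_reverse]
    simp only [List.mem_append, List.mem_cons, List.mem_reverse, List.mem_singleton]
    tauto
  refine ⟨hperm.nodup_iff.2 hnd, fun w => hperm.mem_iff.2 (hcov w), ?_, ?_⟩
  · intro e he
    rw [hmem e] at he
    rcases he with he | he | rfl | rfl
    · exact hHadj e (by rw [hsplit]; exact List.mem_append_left _ he)
    · refine hHadj e ?_
      rw [hsplit]
      exact List.mem_append_right _ (List.mem_cons_of_mem _ he)
    · exact H.mem_edgeSet.2 h2.symm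
    · exact H.mem_edgeSet.2 h1.symm
  · intro e he
    have := hFsub e he
    rw [hsplit, List.mem_append, List.mem_cons] at this
    rw [hmem e]
    rcases this with h | h | h
    · exact Or.inl h
    · exact absurd (h ▸ he) hFmid
    · exact Or.inr (Or.inl h)

lemma list_len [Fintype V] {l : List V} (hnd : l.Nodup) (hcov : ∀ w, w ∈ l) :
    l.length = Fintype.card V := by
  have : l.toFinset = Finset.univ := Finset.eq_univ_iff_forall.2 (fun x => List.mem_toFinset.2 (hcov x))
  rw [← List.toFinset_card_of_nodup hnd, this, Finset.card_univ]

lemma key [Fintype V] {G H F : SimpleGraph V} {k : ℕ}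
    (hGH : G ≤ H) (hFG : F ≤ G)
    (hedges : F.edgeSet.ncard = k)
    (hdeg : ∀ v : V, ((Fintype.card V : ℝ) + k) / 2 ≤ ((G.neighborSet v).ncard : ℝ))
    (hn : 2 ≤ Fintype.card V)
    (L : List V) (hnd : L.Nodup) (hcov : ∀ w, w ∈ L)
    (hHadj : ∀ e ∈ dpairs L, e ∈ H.edgeSet)
    (hFsub : ∀ e ∈ F.edgeSet, e ∈ dpairs L) :
    ∃ l, good H F l := by
  classical
  set n := Fintype.card V with hndef
  have hlen : L.length = n := list_len hnd hcov
  have hLne : L ≠ [] := by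
    intro h; rw [h] at hlen; simp at hlen; omega
  set u := L.head hLne with hu
  set v := L.getLast hLne with hv
  set xi : ℕ → V := fun i => L.getD i u with hxi
  have hxi_get : ∀ i (h : i < n), xi i = L[i]'(by omega) := by
    intro i h
    exact List.getD_eq_getElem L u (by omega)
  have hxiIdx : ∀ w ∈ L, xi (L.idxOf w) = w := by
    intro w hw
    have h' := List.idxOf_lt_length_iff.2 hw
    rw [hxi_get _ (by omega)]
    exact List.getElem_idxOf (by omega)
  have hxi0 : xi 0 = u := by
    rw [hxi_get 0 (by omega), hu, List.head_eq_getElem]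
  have hxin : xi (n-1) = v := by
    rw [hxi_get (n-1) (by omega), hv, List.getLast_eq_getElem]
    congr 1
    omega
  -- the two index sets
  set S : Finset ℕ := (Finset.range (n-1)).filter (fun i => H.Adj u (xi (i+1))) with hSdef
  set T : Finset ℕ := (Finset.range (n-1)).filter (fun i => H.Adj v (xi i)) with hTdef
  have hScard : (G.neighborSet u).ncard ≤ S.card := by
    rw [Set.ncard_eq_toFinset_card _ (Set.toFinite _)]
    apply Finset.card_le_card_of_injOn (fun w => L.idxOf w - 1)
    · intro w hw
      rw [Finset.mem_coe, Set.Finite.mem_toFinset] at hw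
      have hadj : G.Adj u w := hw
      have hwL : w ∈ L := hcov w
      have hj : L.idxOf w < n := by
        have := List.idxOf_lt_length_iff.2 hwL
        omega
      have hjw : xi (L.idxOf w) = w := hxiIdx w hwL
      have hj0 : L.idxOf w ≠ 0 := by
        intro h0
        apply hadj.ne
        rw [← hjw, h0, hxi0]
      rw [hSdef, Finset.mem_coe, Finset.mem_filter, Finset.mem_range]; beta_reduce
      constructor
      · omega
      · have heq : L.idxOf w - 1 + 1 = L.idxOf w := by omega
        rw [heq, hjw]
        exact hGH hadj
    · intro w1 h1 w2 h2 heq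
      simp only [Finset.mem_coe, Set.Finite.mem_toFinset] at h1 h2
      simp only at heq
      have hw1 : w1 ∈ L := hcov w1
      have hw2 : w2 ∈ L := hcov w2
      have e1 : L.idxOf w1 ≠ 0 := by
        intro h0
        apply (h1 : G.Adj u w1).ne
        rw [← hxiIdx w1 hw1, h0, hxi0]
      have e2 : L.idxOf w2 ≠ 0 := by
        intro h0
        apply (h2 : G.Adj u w2).ne
        rw [← hxiIdx w2 hw2, h0, hxi0]
      have hind : L.idxOf w1 = L.idxOf w2 := by omega
      rw [← hxiIdx w1 hw1, ← hxiIdx w2 hw2, hind]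
  have hTcard : (G.neighborSet v).ncard ≤ T.card := by
    rw [Set.ncard_eq_toFinset_card _ (Set.toFinite _)]
    apply Finset.card_le_card_of_injOn (fun w => L.idxOf w)
    · intro w hw
      rw [Finset.mem_coe, Set.Finite.mem_toFinset] at hw
      have hadj : G.Adj v w := hw
      have hwL : w ∈ L := hcov w
      have hj : L.idxOf w < n := by
        have := List.idxOf_lt_length_iff.2 hwL
        omega
      have hjw : xi (L.idxOf w) = w := hxiIdx w hwL
      have hjn : L.idxOf w ≠ n - 1 := by
        intro h0
        apply hadj.ne
        rw [← hjw, h0, hxin]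
      rw [hTdef, Finset.mem_coe, Finset.mem_filter, Finset.mem_range]; beta_reduce
      refine ⟨by omega, ?_⟩
      rw [hjw]
      exact hGH hadj
    · intro w1 h1 w2 h2 heq
      simp only [Finset.mem_coe, Set.Finite.mem_toFinset] at h1 h2
      simp only at heq
      rw [← hxiIdx w1 (hcov w1), ← hxiIdx w2 (hcov w2), heq]
  have hunion : (S ∪ T).card ≤ n - 1 := by
    have : S ∪ T ⊆ Finset.range (n-1) := by
      rw [hSdef, hTdef]
      exact Finset.union_subset (Finset.filter_subset _ _) (Finset.filter_subset _ _)
    simpa using Finset.card_le_card this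
  have hcards : S.card + T.card = (S ∪ T).card + (S ∩ T).card := by
    rw [Finset.card_union_add_card_inter]
  have hnk : n + k ≤ (G.neighborSet u).ncard + (G.neighborSet v).ncard := by
    have h1 := hdeg u
    have h2 := hdeg v
    have : (n : ℝ) + k ≤ ((G.neighborSet u).ncard : ℝ) + ((G.neighborSet v).ncard : ℝ) := by
      linarith
    exact_mod_cast this
  have hinter : k + 1 ≤ (S ∩ T).card := by omega
  have hFfin : F.edgeSet.Finite := Set.toFinite _
  have hexists : ∃ i ∈ S ∩ T, s(xi i, xi (i+1)) ∉ F.edgeSet := by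
    by_contra hcon
    push_neg at hcon
    have hle : (S ∩ T).card ≤ hFfin.toFinset.card := by
      apply Finset.card_le_card_of_injOn (fun i => s(xi i, xi (i+1)))
      · intro i hi
        rw [Finset.mem_coe, Set.Finite.mem_toFinset]
        exact hcon i hi
      · intro i hi j hj heq
        have hi' : i < n - 1 := by
          have := Finset.mem_of_mem_inter_left hi
          rw [hSdef, Finset.mem_filter, Finset.mem_range] at this
          exact this.1
        have hj' : j < n - 1 := by
          have := Finset.mem_of_mem_inter_left hj
          rw [hSdef, Finset.mem_filter, Finset.mem_range] at this
          exact this.1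
        simp only at heq
        rw [hxi_get i (by omega), hxi_get (i+1) (by omega), hxi_get j (by omega),
          hxi_get (j+1) (by omega), Sym2.eq_iff] at heq
        have hinj : ∀ (i' j' : ℕ) (hi' : i' < L.length) (hj' : j' < L.length),
            L[i'] = L[j'] → i' = j' := by
          intro i' j' hi' hj' h
          exact (List.Nodup.getElem_inj_iff hnd).1 h
        rcases heq with ⟨ha, hb⟩ | ⟨ha, hb⟩
        · exact hinj i j (by omega) (by omega) ha
        · have := hinj i (j+1) (by omega) (by omega) ha
          have := hinj (i+1) j (by omega) (by omega) hb
          omega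
    rw [← Set.ncard_eq_toFinset_card _ hFfin, hedges] at hle
    omega
  obtain ⟨i, hiST, hiF⟩ := hexists
  have hiS := Finset.mem_of_mem_inter_left hiST
  have hiT := Finset.mem_of_mem_inter_right hiST
  rw [hSdef, Finset.mem_filter, Finset.mem_range] at hiS
  rw [hTdef, Finset.mem_filter, Finset.mem_range] at hiT
  obtain ⟨hilt, hiAdjU⟩ := hiS
  obtain ⟨-, hiAdjV⟩ := hiT
  set P := L.take (i+1) with hPdef
  set Q := L.drop (i+1) with hQdef
  have hPQ : P ++ Q = L := List.take_append_drop _ _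
  have hPlen : P.length = i + 1 := by
    rw [hPdef, List.length_take]
    omega
  have hQlen : Q.length = n - (i+1) := by
    rw [hQdef, List.length_drop, hlen]
  have hPne : P ≠ [] := by
    intro h; rw [h] at hPlen; simp at hPlen
  have hQne : Q ≠ [] := by
    intro h; rw [h] at hQlen; simp at hQlen; omega
  have hPlast : P.getLast hPne = xi i := by
    rw [hxi_get i (by omega)]
    simp only [hPdef, List.getLast_take, Nat.add_sub_cancel]
    rw [List.getElem?_eq_getElem (by omega)]
    rfl
  have hQhead : Q.head hQne = xi (i+1) := by
    rw [hxi_get (i+1) (by omega)]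
    simp only [hQdef, List.head_drop]
  have hPhead : P.head hPne = u := by
    rw [hu]
    simp only [hPdef]
    exact List.head_take _
  have hQlast : Q.getLast hQne = v := by
    rw [hv]
    simp only [hQdef]
    exact List.getLast_drop _
  refine ⟨P ++ Q.reverse, surgery P Q hPne hQne ?_ ?_ ?_ ?_ ?_ ?_ ?_⟩
  · rw [hPQ]; exact hnd
  · rw [hPQ]; exact hcov
  · rw [hPQ]; exact hHadj
  · rw [hPQ]; exact hFsub
  · rw [hPlast, hQhead]; exact hiF
  · rw [hPhead, hQhead]; exact hiAdjU
  · rw [hQlast, hPlast]; exact hiAdjV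

lemma edge_end_of_path {G : SimpleGraph V} {a b : V} {p : G.Walk a b} (hp : p.IsPath)
    (h : s(b, a) ∈ p.edges) : p.length = 1 := by
  cases p with
  | nil => simp at h
  | @cons _ c _ h' r =>
    rw [Walk.edges_cons, List.mem_cons] at h
    rcases h with h | h
    · rw [Sym2.eq_iff] at h
      rcases h with ⟨hb, hac⟩ | ⟨hb, -⟩
      · exact absurd hac h'.ne
      · subst hb
        rw [Walk.cons_isPath_iff] at hp
        have : r = Walk.nil := (Walk.isPath_iff_eq_nil (p := r)).1 hp.1
        rw [Walk.length_cons, this]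
        rfl
    · exfalso
      have : a ∈ r.support := Walk.snd_mem_support_of_mem_edges r h
      rw [Walk.cons_isPath_iff] at hp
      exact hp.2 this

lemma exists_leaf {G : SimpleGraph V} [Fintype V] (hac : G.IsAcyclic) {x y : V}
    (hxy : G.Adj x y) : ∃ a b, G.Adj a b ∧ ∀ c, G.Adj a c → c = b := by
  classical
  set Sp := {n | ∃ (u v : V) (p : G.Walk u v), p.IsPath ∧ p.length = n} with hSp
  have h1 : 1 ∈ Sp := by
    refine ⟨x, y, Walk.cons hxy Walk.nil, ?_, rfl⟩
    rw [Walk.cons_isPath_iff]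
    exact ⟨Walk.IsPath.nil, by simp [hxy.ne]⟩
  have hbdd : BddAbove Sp := by
    refine ⟨Fintype.card V, fun n hn => ?_⟩
    obtain ⟨u, v, p, hp, rfl⟩ := hn
    exact le_of_lt hp.length_lt
  have hN : sSup Sp ∈ Sp := Nat.sSup_mem ⟨1, h1⟩ hbdd
  have hN1 : 1 ≤ sSup Sp := le_csSup hbdd h1
  obtain ⟨u, v, p, hp, hlen⟩ := hN
  have hlt : 0 < p.length := by omega
  have hadj1 : G.Adj u (p.getVert 1) := by simpa using p.adj_getVert_succ (i := 0) hlt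
  refine ⟨u, p.getVert 1, hadj1, ?_⟩
  intro c hc
  by_contra hne
  by_cases hmem : c ∈ p.support
  · have hq : (p.takeUntil c hmem).IsPath := hp.takeUntil hmem
    have hcyc : (Walk.cons hc.symm (p.takeUntil c hmem)).IsCycle := by
      rw [Walk.cons_isCycle_iff]
      refine ⟨hq, ?_⟩
      intro hedge
      have hql : (p.takeUntil c hmem).length = 1 := edge_end_of_path hq hedge
      apply hne
      have hspec := p.take_spec hmem
      have hgv : p.getVert 1 = c := by
        rw [← hspec, Walk.getVert_append, if_neg (by omega), hql]
        exact Walk.getVert_zero _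
      rw [hgv]
    exact hac _ hcyc
  · have hq : (Walk.cons hc.symm p).IsPath := by
      rw [Walk.cons_isPath_iff]
      exact ⟨hp, hmem⟩
    have hmem' : p.length + 1 ∈ Sp := ⟨c, v, Walk.cons hc.symm p, hq, by simp⟩
    have := le_csSup hbdd hmem'
    omega

lemma mem_dpairs_middle {e : Sym2 V} {C : List V} {b : V} {D : List V}
    (h : e ∈ dpairs (C ++ b :: D)) :
    e ∈ dpairs C ∨ (∃ hC : C ≠ [], e = s(C.getLast hC, b)) ∨ e ∈ dpairs (b :: D) := by
  cases C with
  | nil => right; right; simpa using h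
  | cons c C' =>
    rw [dpairs_append (c :: C') (b :: D) (by simp) (by simp)] at h
    rw [List.mem_append, List.mem_cons] at h
    rcases h with h | h | h
    · exact Or.inl h
    · exact Or.inr (Or.inl ⟨by simp, by simpa using h⟩)
    · exact Or.inr (Or.inr h)

lemma mem_dpairs_remove {e : Sym2 V} {C : List V} {a : V} {D : List V}
    (h : e ∈ dpairs (C ++ a :: D)) (ha : a ∉ e) : e ∈ dpairs (C ++ D) := by
  rcases mem_dpairs_middle h with h | ⟨hC, rfl⟩ | h
  · exact mem_dpairs_append_left _ h
  · exact absurd (Sym2.mem_mk_right _ a) ha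
  · cases D with
    | nil => simp [dpairs] at h
    | cons d D' =>
      rw [dpairs_cons_cons, List.mem_cons] at h
      rcases h with rfl | h
      · exact absurd (Sym2.mem_mk_left a d) ha
      · exact mem_dpairs_append_right _ h

lemma linlist [Fintype V] : ∀ (k : ℕ) (F : SimpleGraph V), F.IsAcyclic →
    (∀ v, (F.neighborSet v).ncard ≤ 2) → F.edgeSet.ncard = k →
    ∃ l : List V, l.Nodup ∧ (∀ w, w ∈ l) ∧ ∀ e ∈ F.edgeSet, e ∈ dpairs l := by
  intro k
  induction k with
  | zero =>
    intro F hac hdeg2 hcard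
    refine ⟨Finset.univ.toList, Finset.nodup_toList _, fun w => by simp, ?_⟩
    have : F.edgeSet = ∅ := (Set.ncard_eq_zero (Set.toFinite _)).1 hcard
    simp [this]
  | succ k ih =>
    intro F hac hdeg2 hcard
    have hne : F.edgeSet.Nonempty := by
      rw [Set.nonempty_iff_ne_empty]
      intro h
      rw [h] at hcard
      simp at hcard
    obtain ⟨e0, he0⟩ := hne
    have hadjxy : ∃ x y, F.Adj x y := by
      revert he0
      induction e0 using Sym2.ind with
      | _ x y => exact fun h => ⟨x, y, h⟩
    obtain ⟨x, y, hxy⟩ := hadjxy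
    obtain ⟨a, b, hab, hleaf⟩ := exists_leaf hac hxy
    set F' := F.deleteEdges {s(a, b)} with hF'
    have hF'le : F' ≤ F := SimpleGraph.deleteEdges_le _
    have hF'ac : F'.IsAcyclic := fun v c hc => hac (c.mapLe hF'le) ((Walk.mapLe_isCycle hF'le).2 hc)
    have hF'deg : ∀ v, (F'.neighborSet v).ncard ≤ 2 := fun v =>
      le_trans (Set.ncard_le_ncard (fun w hw => hF'le hw) (Set.toFinite _)) (hdeg2 v)
    have hedge_mem : s(a, b) ∈ F.edgeSet := hab
    have hF'edges : F'.edgeSet = F.edgeSet \ {s(a, b)} := by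
      rw [hF', edgeSet_deleteEdges]
    have hF'card : F'.edgeSet.ncard = k := by
      rw [hF'edges, Set.ncard_diff_singleton_of_mem hedge_mem, hcard]
      omega
    obtain ⟨l0, hl0nd, hl0cov, hl0F⟩ := ih F' hF'ac hF'deg hF'card
    have haiso : ∀ c, ¬ F'.Adj a c := by
      intro c hc
      rw [hF', SimpleGraph.deleteEdges_adj] at hc
      have := hleaf c hc.1
      subst this
      exact hc.2 rfl
    have hb1 : ∀ c d, F'.Adj b c → F'.Adj b d → c = d := by
      intro c d hc hd
      by_contra hcd
      have hca : c ≠ a := by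
        rintro rfl
        exact haiso b hc.symm
      have hda : d ≠ a := by
        rintro rfl
        exact haiso b hd.symm
      have hsub : ({c, d, a} : Set V) ⊆ F.neighborSet b := by
        intro z hz
        rcases hz with rfl | rfl | rfl
        · exact hF'le hc
        · exact hF'le hd
        · exact hab.symm
      have h3 : ({c, d, a} : Set V).ncard = 3 := by
        rw [Set.ncard_insert_of_notMem (by simp [hcd, hca]) (Set.toFinite _),
          Set.ncard_insert_of_notMem (by simp [hda]) (Set.toFinite _), Set.ncard_singleton]
      have hle := Set.ncard_le_ncard hsub (Set.toFinite _)
      have := hdeg2 b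
      omega
    obtain ⟨C0, D0, hl0⟩ := List.append_of_mem (hl0cov a)
    have hpermC0 : l0.Perm (a :: (C0 ++ D0)) := by
      rw [hl0]
      exact List.perm_middle
    have hnd1 : (a :: (C0 ++ D0)).Nodup := hpermC0.nodup_iff.1 hl0nd
    rw [List.nodup_cons] at hnd1
    obtain ⟨hanotin, hl1nd⟩ := hnd1
    have hF'l1 : ∀ e ∈ F'.edgeSet, e ∈ dpairs (C0 ++ D0) := by
      intro e he
      have hel0 : e ∈ dpairs l0 := hl0F e he
      rw [hl0] at hel0
      refine mem_dpairs_remove hel0 ?_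
      intro hae
      obtain ⟨c, rfl⟩ := Sym2.mem_iff_exists.1 hae
      exact haiso c (F'.mem_edgeSet.1 he)
    have hbne : b ≠ a := hab.ne'
    have hbmem : b ∈ C0 ++ D0 := by
      have hb := hl0cov b
      rw [hl0] at hb
      rcases List.mem_append.1 hb with h | h
      · exact List.mem_append_left _ h
      · rcases List.mem_cons.1 h with h | h
        · exact absurd h hbne
        · exact List.mem_append_right _ h
    obtain ⟨C, D, hl1⟩ := List.append_of_mem hbmem
    rw [hl1] at hl1nd hF'l1 hanotin
    have hcovCD : ∀ w, w ∈ a :: (C ++ b :: D) := by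
      intro w
      have hw := hl0cov w
      rw [hl0] at hw
      rw [List.mem_cons]
      rcases List.mem_append.1 hw with h | h
      · right; rw [← hl1]; exact List.mem_append_left _ h
      · rcases List.mem_cons.1 h with h | h
        · exact Or.inl h
        · right; rw [← hl1]; exact List.mem_append_right _ h
    -- edges of F are F' edges plus s(a,b)
    have hFsplit : ∀ e ∈ F.edgeSet, e = s(a, b) ∨ e ∈ F'.edgeSet := by
      intro e he
      by_cases h : e = s(a, b)
      · exact Or.inl h
      · right
        rw [hF'edges]
        exact ⟨he, h⟩
    by_cases hcase : ∃ d D', D = d :: D' ∧ s(b, d) ∈ F'.edgeSet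
    · -- insert a before b
      obtain ⟨d, D', hD, hbd⟩ := hcase
      refine ⟨C ++ a :: b :: D, ?_, ?_, ?_⟩
      · have hperm : (C ++ a :: b :: D).Perm (a :: (C ++ b :: D)) := List.perm_middle
        rw [hperm.nodup_iff, List.nodup_cons]
        exact ⟨hanotin, hl1nd⟩
      · intro w
        have := hcovCD w
        have hperm : (C ++ a :: b :: D).Perm (a :: (C ++ b :: D)) := List.perm_middle
        rw [hperm.mem_iff]
        exact this
      · intro e he
        rcases hFsplit e he with rfl | he'
        · exact mem_dpairs_join C a b D
        · have := hF'l1 e he'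
          rcases mem_dpairs_middle this with h | ⟨hC, rfl⟩ | h
          · exact mem_dpairs_append_left _ h
          · exfalso
            have hadjC : F'.Adj b (C.getLast hC) := by
              have := F'.mem_edgeSet.1 (by rwa [Sym2.eq_swap] at he')
              exact this
            have heq := hb1 _ _ hadjC hbd
            have h1 : C.getLast hC ∈ C := List.getLast_mem hC
            have h2 : d ∈ b :: D := by rw [hD]; exact List.mem_cons_of_mem _ (List.mem_cons_self)
            rw [heq] at h1
            rw [List.nodup_append] at hl1nd
            exact hl1nd.2.2 _ h1 _ h2 rfl
          · have : C ++ a :: b :: D = (C ++ [a]) ++ b :: D := by simp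
            rw [this]
            exact mem_dpairs_append_right _ h
    · -- insert a after b
      refine ⟨C ++ b :: a :: D, ?_, ?_, ?_⟩
      · have hperm : (C ++ b :: a :: D).Perm (a :: (C ++ b :: D)) := by
          have h1 : C ++ b :: a :: D = (C ++ [b]) ++ a :: D := by simp
          have h2 : List.Perm ((C ++ [b]) ++ a :: D) (a :: ((C ++ [b]) ++ D)) :=
            List.perm_middle
          rw [h1]
          refine h2.trans ?_
          have h3 : (C ++ [b]) ++ D = C ++ b :: D := by simp
          rw [h3]
        rw [hperm.nodup_iff, List.nodup_cons]
        exact ⟨hanotin, hl1nd⟩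
      · intro w
        have := hcovCD w
        have hperm : (C ++ b :: a :: D).Perm (a :: (C ++ b :: D)) := by
          have h1 : C ++ b :: a :: D = (C ++ [b]) ++ a :: D := by simp
          have h2 : List.Perm ((C ++ [b]) ++ a :: D) (a :: ((C ++ [b]) ++ D)) :=
            List.perm_middle
          rw [h1]
          refine h2.trans ?_
          have h3 : (C ++ [b]) ++ D = C ++ b :: D := by simp
          rw [h3]
        rw [hperm.mem_iff]
        exact this
      · intro e he
        rcases hFsplit e he with rfl | he'
        · rw [Sym2.eq_swap]
          exact mem_dpairs_join C b a D
        · have := hF'l1 e he'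
          rcases mem_dpairs_middle this with h | ⟨hC, rfl⟩ | h
          · exact mem_dpairs_append_left _ h
          · have hsplitC := List.dropLast_append_getLast hC
            have : C ++ b :: a :: D = C.dropLast ++ (C.getLast hC) :: b :: (a :: D) := by
              conv_lhs => rw [← hsplitC]
              simp
            rw [this]
            exact mem_dpairs_join _ _ _ _
          · cases D with
            | nil => simp [dpairs] at h
            | cons d D' =>
              rw [dpairs_cons_cons, List.mem_cons] at h
              rcases h with rfl | h
              · exact absurd ⟨d, D', rfl, he'⟩ hcase
              · have : C ++ b :: a :: d :: D' = (C ++ [b, a]) ++ d :: D' := by simp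
                rw [this]
                exact mem_dpairs_append_right _ h

lemma complete_good [Fintype V] {H F : SimpleGraph V} (hcomp : ∀ x y : V, x ≠ y → H.Adj x y)
    {l : List V} (hnd : l.Nodup) (hcov : ∀ w, w ∈ l) (hlen : 2 ≤ l.length)
    (hF : ∀ e ∈ F.edgeSet, e ∈ dpairs l) : good H F l := by
  refine ⟨hnd, hcov, ?_, fun e he => dpairs_subset_cyc (hF e he)⟩
  intro e he
  have hne : l ≠ [] := by intro h; rw [h] at hlen; simp at hlen
  rw [cyc_eq _ hne, List.mem_append, List.mem_singleton] at he
  rcases he with he | rfl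
  · obtain ⟨A, x2, y2, B, hL, rfl⟩ := mem_dpairs_split he
    refine H.mem_edgeSet.2 (hcomp _ _ ?_)
    intro hxy
    rw [hL] at hnd
    have h2 := hnd.of_append_right
    rw [List.nodup_cons] at h2
    exact h2.1 (hxy ▸ List.mem_cons_self)
  · refine H.mem_edgeSet.2 (hcomp _ _ ?_)
    cases l with
    | nil => simp at hlen
    | cons hd t =>
      cases t with
      | nil => simp at hlen
      | cons t0 t' =>
        intro hglh
        rw [List.nodup_cons] at hnd
        refine hnd.1 ?_
        have h1 : (hd :: t0 :: t').getLast (by simp) ∈ t0 :: t' := by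
          rw [List.getLast_cons (by simp : (t0 :: t') ≠ [])]
          exact List.getLast_mem _
        rw [hglh] at h1
        simpa using h1

lemma rotate_ends {l : List V} (hnd : l.Nodup) (hlen : 3 ≤ l.length) {u v : V}
    (h : s(u, v) ∈ cyc l) :
    ∃ (h0 e0 : V) (mid : List V), mid ≠ [] ∧ s(e0, h0) = s(u, v) ∧
      (((h0 :: mid) ++ [e0]).Perm l) ∧ (∀ e, e ∈ cyc ((h0 :: mid) ++ [e0]) ↔ e ∈ cyc l) := by
  have hne : l ≠ [] := by intro hh; rw [hh] at hlen; simp at hlen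
  rw [cyc_eq _ hne, List.mem_append, List.mem_singleton] at h
  rcases h with h | h
  · -- inner pair
    obtain ⟨A, x2, y2, B, hL, he⟩ := mem_dpairs_split h
    refine ⟨y2, x2, B ++ A, ?_, he.symm, ?_, ?_⟩
    · intro hBA
      rw [List.append_eq_nil_iff] at hBA
      rw [hL, hBA.1, hBA.2] at hlen
      simp at hlen
    · have h1 : (y2 :: (B ++ A)) ++ [x2] = (y2 :: B) ++ (A ++ [x2]) := by simp
      have h2 : l = (A ++ [x2]) ++ (y2 :: B) := by rw [hL]; simp
      rw [h1, h2]
      exact List.perm_append_comm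
    · intro e
      have h1 : (y2 :: (B ++ A)) ++ [x2] = (y2 :: B) ++ (A ++ [x2]) := by simp
      have h2 : l = (A ++ [x2]) ++ (y2 :: B) := by rw [hL]; simp
      rw [h1, h2]
      exact (cyc_append_perm (y2 :: B) (A ++ [x2]) (by simp) (by simp)).mem_iff
  · -- wrap pair
    cases l with
    | nil => simp at hlen
    | cons hd t =>
      have ht : t ≠ [] := by intro hh; rw [hh] at hlen; simp at hlen
      refine ⟨hd, t.getLast ht, t.dropLast, ?_, ?_, ?_, ?_⟩
      · intro hh
        have := congrArg List.length hh
        rw [List.length_dropLast] at this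
        have ht2 : 2 ≤ t.length := by
          have := hlen
          simp only [List.length_cons] at this
          omega
        simp at this
        omega
      · rw [h, List.getLast_cons ht, List.head_cons]
      · have : (hd :: t.dropLast) ++ [t.getLast ht] = hd :: t := by
          rw [List.cons_append, List.dropLast_append_getLast ht]
        rw [this]
      · intro e
        have : (hd :: t.dropLast) ++ [t.getLast ht] = hd :: t := by
          rw [List.cons_append, List.dropLast_append_getLast ht]
        rw [this]

lemma main_ind [Fintype V] {G F : SimpleGraph V} {k : ℕ}
    (hFG : F ≤ G) (hforest : F.IsAcyclic) (hdeg2 : ∀ v, (F.neighborSet v).ncard ≤ 2)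
    (hedges : F.edgeSet.ncard = k)
    (hdeg : ∀ v : V, ((Fintype.card V : ℝ) + k) / 2 ≤ ((G.neighborSet v).ncard : ℝ))
    (hn : 3 ≤ Fintype.card V) :
    ∀ (m : ℕ) (H : SimpleGraph V), G ≤ H → Hᶜ.edgeSet.ncard = m → ∃ l, good H F l := by
  intro m
  induction m using Nat.strong_induction_on with
  | _ m ih =>
    intro H hGH hHm
    by_cases hcomp : Hᶜ.edgeSet = ∅
    · obtain ⟨l, h1, h2, h3⟩ := linlist k F hforest hdeg2 hedges
      refine ⟨l, complete_good ?_ h1 h2 ?_ h3⟩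
      · intro x y hxy
        by_contra hadj
        have hc : Hᶜ.Adj x y := (H.compl_adj x y).2 ⟨hxy, hadj⟩
        have : s(x, y) ∈ Hᶜ.edgeSet := hc
        rw [hcomp] at this
        exact this
      · rw [list_len h1 h2]; omega
    · obtain ⟨e0, he0⟩ := Set.nonempty_iff_ne_empty.2 hcomp
      revert he0
      induction e0 using Sym2.ind with
      | _ u v =>
      intro he0
      have huv : Hᶜ.Adj u v := he0
      rw [compl_adj] at huv
      obtain ⟨hneuv, hnadj⟩ := huv
      set H' := H ⊔ fromEdgeSet {s(u, v)} with hH'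
      have hH'c : H'ᶜ.edgeSet = Hᶜ.edgeSet \ {s(u, v)} := by
        ext e
        induction e using Sym2.ind with
        | _ x y =>
          simp only [SimpleGraph.mem_edgeSet, compl_adj, hH', sup_adj, fromEdgeSet_adj,
            Set.mem_diff, Set.mem_singleton_iff]
          constructor
          · rintro ⟨hxy, hor⟩
            push_neg at hor
            exact ⟨⟨hxy, hor.1⟩, fun hh => hxy (hor.2 hh)⟩
          · rintro ⟨⟨hxy, hH⟩, hne'⟩
            refine ⟨hxy, ?_⟩
            rintro (h | ⟨h1, h2⟩)
            · exact hH h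
            · exact hne' h1
      have hmem' : s(u, v) ∈ Hᶜ.edgeSet := he0
      have hcard' : H'ᶜ.edgeSet.ncard = m - 1 := by
        rw [hH'c, Set.ncard_diff_singleton_of_mem hmem', hHm]
      have hmpos : 0 < m := by
        rw [← hHm]
        exact (Set.ncard_pos (Set.toFinite _)).2 ⟨_, hmem'⟩
      obtain ⟨l, hlnd, hlcov, hladj, hlF⟩ :=
        ih (m - 1) (by omega) H' (le_trans hGH le_sup_left) hcard'
      by_cases hgood : ∀ e ∈ cyc l, e ∈ H.edgeSet
      · exact ⟨l, hlnd, hlcov, hgood, hlF⟩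
      · push_neg at hgood
        obtain ⟨e1, he1c, he1H⟩ := hgood
        have hH'edges : H'.edgeSet = H.edgeSet ∪ ({s(u, v)} \ {e : Sym2 V | e.IsDiag}) := by
          rw [hH', edgeSet_sup, edgeSet_fromEdgeSet]; rfl
        have he1uv : e1 = s(u, v) := by
          have h1 := hladj e1 he1c
          rw [hH'edges] at h1
          rcases h1 with h1 | h1
          · exact absurd h1 he1H
          · exact h1.1
        have hllen : l.length = Fintype.card V := list_len hlnd hlcov
        have hsuv : s(u, v) ∈ cyc l := he1uv ▸ he1c
        have hlen3 : 3 ≤ l.length := by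
          rw [hllen]; exact hn
        obtain ⟨h0, e0', mid, hmid, hends, hperm, hcycset⟩ := rotate_ends hlnd hlen3 hsuv
        set L := (h0 :: mid) ++ [e0'] with hLdef
        have hLnd : L.Nodup := hperm.nodup_iff.2 hlnd
        have hLcov : ∀ w, w ∈ L := fun w => hperm.mem_iff.2 (hlcov w)
        have hdp : ∀ e ∈ dpairs L, e ∈ H.edgeSet := by
          intro e he
          have heH' : e ∈ H'.edgeSet := hladj e ((hcycset e).1 (dpairs_subset_cyc he))
          have hene : e ≠ s(u, v) := by
            rintro rfl
            rw [← hends] at he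
            exact not_mem_dpairs_ends hmid hLnd he
          rw [hH'edges] at heH'
          rcases heH' with h1 | h1
          · exact h1
          · exact absurd h1.1 hene
        have hFL : ∀ e ∈ F.edgeSet, e ∈ dpairs L := by
          intro e he
          have hec : e ∈ cyc L := (hcycset e).2 (hlF e he)
          have hLne : L ≠ [] := by simp [hLdef]
          rw [cyc_eq _ hLne, List.mem_append, List.mem_singleton] at hec
          rcases hec with hec | hec
          · exact hec
          · exfalso
            have hlast : L.getLast hLne = e0' := List.getLast_append_of_ne_nil _ (by simp)
            have hhead : L.head hLne = h0 := List.head_append_of_ne_nil (by simp)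
            rw [hlast, hhead, hends] at hec
            have : s(u, v) ∈ H.edgeSet := (SimpleGraph.edgeSet_mono (le_trans hFG hGH)) (hec ▸ he)
            exact hnadj this
        exact key hGH hFG hedges hdeg (by omega) L hLnd hLcov hdp hFL

open SimpleGraph in
theorem stmt6' {V : Type} [Fintype V] [DecidableEq V] (G F : SimpleGraph V) (k : ℕ) (hk : 1 < k)
    (hFG : F ≤ G)
    (hforest : F.IsAcyclic)
    (hdeg2 : ∀ v : V, (F.neighborSet v).ncard ≤ 2)
    (hedges : F.edgeSet.ncard = k)
    (hdeg : ∀ v : V,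
      ((Fintype.card V : ℝ) + k) / 2 ≤ ((G.neighborSet v).ncard : ℝ)) :
    ∃ (u : V) (c : G.Walk u u), c.IsHamiltonianCycle ∧
      ∀ e ∈ F.edgeSet, e ∈ c.edges := by
  classical
  have hneF : F.edgeSet.Nonempty := by
    rw [Set.nonempty_iff_ne_empty]
    intro h
    rw [h] at hedges
    simp at hedges
    omega
  obtain ⟨e0, he0⟩ := hneF
  have hx : ∃ _x : V, True := by
    revert he0
    induction e0 using Sym2.ind with
    | _ x y => exact fun _ => ⟨x, trivial⟩
  obtain ⟨x, -⟩ := hx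
  have hcard1 : 1 ≤ Fintype.card V := Fintype.card_pos_iff.2 ⟨x⟩
  have hsub : G.neighborSet x ⊆ Set.univ \ {x} := by
    intro z hz
    refine ⟨Set.mem_univ z, ?_⟩
    intro hzx
    rw [Set.mem_singleton_iff] at hzx
    subst hzx
    exact G.irrefl hz
  have hle1 : (G.neighborSet x).ncard ≤ Fintype.card V - 1 := by
    have h2 := Set.ncard_le_ncard hsub (Set.toFinite _)
    have h3 : (Set.univ \ {x} : Set V).ncard = Fintype.card V - 1 := by
      rw [Set.ncard_diff_singleton_of_mem (Set.mem_univ x),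
        Set.ncard_univ, Nat.card_eq_fintype_card]
    rw [h3] at h2
    exact h2
  have hn2 : k + 2 ≤ Fintype.card V := by
    have hx' := hdeg x
    have hcast : ((G.neighborSet x).ncard : ℝ) ≤ (Fintype.card V : ℝ) - 1 := by
      have h5 : (G.neighborSet x).ncard + 1 ≤ Fintype.card V := by omega
      have h6 := (Nat.cast_le (α := ℝ)).2 h5
      push_cast at h6
      linarith
    have h4 : (k : ℝ) + 2 ≤ (Fintype.card V : ℝ) := by linarith
    exact_mod_cast h4
  obtain ⟨l, hgood⟩ := Posa.main_ind hFG hforest hdeg2 hedges hdeg (by omega)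
    (Gᶜ.edgeSet.ncard) G le_rfl rfl
  refine Posa.buildHam hgood ?_
  rw [Posa.list_len hgood.1 hgood.2.1]
  omega

end Posa

/-- Pósa's theorem: if `F` is a linear forest with `k > 1` edges in a graph `G` of
order `n` with `δ(G) ≥ (n+k)/2`, then `G` has a Hamilton cycle containing `F`. -/
theorem stmt6 (G F : SimpleGraph V) (k : ℕ) (hk : 1 < k)
    (hFG : F ≤ G)
    (hforest : F.IsAcyclic)
    (hdeg2 : ∀ v : V, (F.neighborSet v).ncard ≤ 2)
    (hedges : F.edgeSet.ncard = k)
    (hdeg : ∀ v : V,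
      ((Fintype.card V : ℝ) + k) / 2 ≤ ((G.neighborSet v).ncard : ℝ)) :
    ∃ (u : V) (c : G.Walk u u), c.IsHamiltonianCycle ∧
      ∀ e ∈ F.edgeSet, e ∈ c.edges := by
  exact Posa.stmt6' G F k hk hFG hforest hdeg2 hedges hdeg
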